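/- For all k ∈ ℕ, the number of points in the iterated point–line construction strictly increases at every stage: n_{k+1} ≥ n_k + 1. -/

import Mathlib

noncomputable section

/-- Points of the real plane. -/
abbrev Pt := ℝ × ℝ

/-- Lines are affine subspaces of the plane (we restrict to 1-dimensional ones via `IsLine`). -/
abbrev Ln := AffineSubspace ℝ Pt

/-- A line is a 1-dimensional affine subspace of `ℝ²`. -/
def IsLine (l : Ln) : Prop := Module.finrank ℝ l.direction = 1

/-- The line through two (distinct) points. -/
def lineThrough (p q : Pt) : Ln := affineSpan ℝ {p, q}

/-- twice the signed area of the triangle `a b c`. -/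
def detp (a b c : Pt) : ℝ := (b.1 - a.1) * (c.2 - a.2) - (b.2 - a.2) * (c.1 - a.1)

lemma mem_lineThrough_iff {p q x : Pt} :
    x ∈ lineThrough p q ↔ ∃ t : ℝ, x.1 = p.1 + t * (q.1 - p.1) ∧ x.2 = p.2 + t * (q.2 - p.2) := by
  have h : x = (x - p) +ᵥ p := by simp
  rw [lineThrough, show x = (x - p) +ᵥ p by simp, vadd_left_mem_affineSpan_pair]
  constructor
  · rintro ⟨r, hr⟩
    refine ⟨r, ?_, ?_⟩
    · have := congrArg Prod.fst hr
      simp [vsub_eq_sub, Prod.smul_fst] at this ⊢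
      linarith [this]
    · have := congrArg Prod.snd hr
      simp [vsub_eq_sub, Prod.smul_snd] at this ⊢
      linarith [this]
  · rintro ⟨t, h1, h2⟩
    simp only [vadd_eq_add, sub_add_cancel] at h1 h2
    refine ⟨t, ?_⟩
    apply Prod.ext <;> simp [vsub_eq_sub, Prod.smul_fst, Prod.smul_snd] <;> linarith

lemma left_mem_lineThrough (p q : Pt) : p ∈ lineThrough p q :=
  left_mem_affineSpan_pair ℝ p q

lemma right_mem_lineThrough (p q : Pt) : q ∈ lineThrough p q :=
  right_mem_affineSpan_pair ℝ p q

lemma mem_lineThrough_iff_det {p q x : Pt} (hpq : p ≠ q) :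
    x ∈ lineThrough p q ↔ detp p q x = 0 := by
  rw [mem_lineThrough_iff]
  constructor
  · rintro ⟨t, h1, h2⟩
    simp only [detp, h1, h2]; ring
  · intro hd
    have h : q.1 - p.1 ≠ 0 ∨ q.2 - p.2 ≠ 0 := by
      by_contra hc
      push_neg at hc
      have h1 := sub_eq_zero.mp hc.1
      have h2 := sub_eq_zero.mp hc.2
      exact hpq (Prod.ext h1.symm h2.symm)
    rcases h with h | h
    · refine ⟨(x.1 - p.1) / (q.1 - p.1), by field_simp; ring, ?_⟩
      unfold detp at hd
      field_simp
      nlinarith [hd]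
    · refine ⟨(x.2 - p.2) / (q.2 - p.2), ?_, by field_simp; ring⟩
      unfold detp at hd
      field_simp
      nlinarith [hd]

lemma detp_eq_zero_left (p q : Pt) : detp p q p = 0 := by unfold detp; ring

lemma detp_eq_zero_right (p q : Pt) : detp p q q = 0 := by unfold detp; ring

lemma lineThrough_eq_of_mem {p q x y : Pt} (hpq : p ≠ q) (hxy : x ≠ y)
    (hx : x ∈ lineThrough p q) (hy : y ∈ lineThrough p q) :
    lineThrough p q = lineThrough x y := by
  apply le_antisymm
  · -- p, q ∈ lineThrough x y
    rcases mem_lineThrough_iff.mp hx with ⟨s, hs1, hs2⟩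
    rcases mem_lineThrough_iff.mp hy with ⟨t, ht1, ht2⟩
    have hp : p ∈ lineThrough x y := by
      rw [mem_lineThrough_iff_det hxy]
      unfold detp; rw [hs1, hs2, ht1, ht2]; ring
    have hq : q ∈ lineThrough x y := by
      rw [mem_lineThrough_iff_det hxy]
      unfold detp; rw [hs1, hs2, ht1, ht2]; ring
    rw [lineThrough, affineSpan_le]
    intro z hz
    rcases hz with rfl | hz
    · exact hp
    · rcases hz with rfl; exact hq
  · rw [lineThrough, affineSpan_le]
    intro z hz
    rcases hz with rfl | hz
    · exact hx
    · rcases hz with rfl; exact hy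

/-- Two distinct lines meet in at most one point. -/
lemma inter_unique {a b c d x y : Pt} (hab : a ≠ b) (hcd : c ≠ d)
    (hne : lineThrough a b ≠ lineThrough c d)
    (hx1 : x ∈ lineThrough a b) (hx2 : x ∈ lineThrough c d)
    (hy1 : y ∈ lineThrough a b) (hy2 : y ∈ lineThrough c d) : x = y := by
  by_contra hxy
  exact hne ((lineThrough_eq_of_mem hab hxy hx1 hy1).trans
    (lineThrough_eq_of_mem hcd hxy hx2 hy2).symm)

lemma collinear_of_detp_eq_zero {p q r : Pt} (h : detp p q r = 0) :
    Collinear ℝ ({p, q, r} : Set Pt) := by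
  by_cases hpq : p = q
  · subst hpq
    have : ({p, p, r} : Set Pt) = {p, r} := by simp
    rw [this]
    exact collinear_pair ℝ p r
  · have hr : r ∈ lineThrough p q := (mem_lineThrough_iff_det hpq).mpr h
    have hc : Collinear ℝ ({r, p, q} : Set Pt) :=
      collinear_insert_of_mem_affineSpan_pair hr
    apply hc.subset
    intro z hz
    simp only [Set.mem_insert_iff, Set.mem_singleton_iff] at hz ⊢
    tauto

lemma detp_ne_zero_of_not_collinear {p q r : Pt} (h : ¬ Collinear ℝ ({p, q, r} : Set Pt)) :
    detp p q r ≠ 0 := fun hd => h (collinear_of_detp_eq_zero hd)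

lemma ne_of_detp_ne_zero {p q r : Pt} (h : detp p q r ≠ 0) :
    p ≠ q ∧ p ≠ r ∧ q ≠ r := by
  refine ⟨?_, ?_, ?_⟩ <;> rintro rfl <;> apply h <;> unfold detp <;> ring

lemma direction_lineThrough (p q : Pt) :
    (lineThrough p q).direction = Submodule.span ℝ {p - q} := by
  rw [lineThrough, direction_affineSpan, vectorSpan_pair]
  rfl

lemma cross_ne_zero_of_dir_ne {a b c d : Pt} (hab : a ≠ b) (hcd : c ≠ d)
    (hdir : (lineThrough a b).direction ≠ (lineThrough c d).direction) :
    (b.1 - a.1) * (d.2 - c.2) - (b.2 - a.2) * (d.1 - c.1) ≠ 0 := by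
  intro hcr
  apply hdir
  rw [direction_lineThrough, direction_lineThrough]
  set u : Pt := a - b with hu
  set w : Pt := c - d with hw
  have hu0 : u ≠ 0 := sub_ne_zero.mpr hab
  have hw0 : w ≠ 0 := sub_ne_zero.mpr hcd
  have hcr' : u.1 * w.2 = u.2 * w.1 := by
    have h1 : u.1 = -(b.1 - a.1) := by simp [hu]
    have h2 : u.2 = -(b.2 - a.2) := by simp [hu]
    have h3 : w.1 = -(d.1 - c.1) := by simp [hw]
    have h4 : w.2 = -(d.2 - c.2) := by simp [hw]
    rw [h1, h2, h3, h4]; nlinarith [hcr]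
  have key : ∀ v v' : Pt, v ≠ 0 → v' ≠ 0 → v.1 * v'.2 = v.2 * v'.1 →
      Submodule.span ℝ {v'} ≤ Submodule.span ℝ {v} := by
    intro v v' hv hv' hvv
    rw [Submodule.span_singleton_le_iff_mem, Submodule.mem_span_singleton]
    rcases (by
      by_contra hc
      push_neg at hc
      exact hv (Prod.ext hc.1 hc.2) : v.1 ≠ 0 ∨ v.2 ≠ 0) with h | h
    · refine ⟨v'.1 / v.1, Prod.ext ?_ ?_⟩
      · simp only [Prod.smul_fst, smul_eq_mul]; field_simp
      · simp only [Prod.smul_snd, smul_eq_mul]; field_simp; nlinarith [hvv]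
    · refine ⟨v'.2 / v.2, Prod.ext ?_ ?_⟩
      · simp only [Prod.smul_fst, smul_eq_mul]; field_simp; nlinarith [hvv]
      · simp only [Prod.smul_snd, smul_eq_mul]; field_simp
  exact le_antisymm (key w u hw0 hu0 (by linarith [hcr'])) (key u w hu0 hw0 hcr')

/-- Two non-parallel lines meet. -/
lemma exists_inter {a b c d : Pt} (hab : a ≠ b) (hcd : c ≠ d)
    (hdir : (lineThrough a b).direction ≠ (lineThrough c d).direction) :
    ∃ x : Pt, x ∈ lineThrough a b ∧ x ∈ lineThrough c d := by
  have hcr := cross_ne_zero_of_dir_ne hab hcd hdir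
  set cr : ℝ := (b.1 - a.1) * (d.2 - c.2) - (b.2 - a.2) * (d.1 - c.1) with hcrdef
  set t : ℝ := detp c d a / cr with ht
  refine ⟨(a.1 + t * (b.1 - a.1), a.2 + t * (b.2 - a.2)), ?_, ?_⟩
  · exact mem_lineThrough_iff.mpr ⟨t, rfl, rfl⟩
  · rw [mem_lineThrough_iff_det hcd]
    unfold detp
    simp only
    rw [ht]
    unfold detp
    field_simp
    ring

lemma side_pigeonhole (t a b c : ℝ) (hab : a ≠ b) (hac : a ≠ c) (hbc : b ≠ c) :
    ∃ α β : ℝ, α ≠ β ∧ (α = a ∨ α = b ∨ α = c) ∧ (β = a ∨ β = b ∨ β = c) ∧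
      (α - β)^2 ≤ (β - t)^2 := by
  have key : ∀ x y : ℝ, x ≠ y → ((t ≤ x ∧ t ≤ y) ∨ (x ≤ t ∧ y ≤ t)) →
      ∃ α β : ℝ, α ≠ β ∧ (α = x ∨ α = y) ∧ (β = x ∨ β = y) ∧ (α - β)^2 ≤ (β - t)^2 := by
    intro x y hxy hside
    rcases le_total x y with h | h
    · rcases hside with ⟨h1, h2⟩ | ⟨h1, h2⟩
      · exact ⟨x, y, hxy, Or.inl rfl, Or.inr rfl, by nlinarith⟩
      · exact ⟨y, x, Ne.symm hxy, Or.inr rfl, Or.inl rfl, by nlinarith⟩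
    · rcases hside with ⟨h1, h2⟩ | ⟨h1, h2⟩
      · exact ⟨y, x, Ne.symm hxy, Or.inr rfl, Or.inl rfl, by nlinarith⟩
      · exact ⟨x, y, hxy, Or.inl rfl, Or.inr rfl, by nlinarith⟩
  rcases le_total t a with ha | ha
  · rcases le_total t b with hb | hb
    · obtain ⟨α, β, h1, h2, h3, h4⟩ := key a b hab (Or.inl ⟨ha, hb⟩)
      exact ⟨α, β, h1, by tauto, by tauto, h4⟩
    · rcases le_total t c with hc | hc
      · obtain ⟨α, β, h1, h2, h3, h4⟩ := key a c hac (Or.inl ⟨ha, hc⟩)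
        exact ⟨α, β, h1, by tauto, by tauto, h4⟩
      · obtain ⟨α, β, h1, h2, h3, h4⟩ := key b c hbc (Or.inr ⟨hb, hc⟩)
        exact ⟨α, β, h1, by tauto, by tauto, h4⟩
  · rcases le_total t b with hb | hb
    · rcases le_total t c with hc | hc
      · obtain ⟨α, β, h1, h2, h3, h4⟩ := key b c hbc (Or.inl ⟨hb, hc⟩)
        exact ⟨α, β, h1, by tauto, by tauto, h4⟩
      · obtain ⟨α, β, h1, h2, h3, h4⟩ := key a c hac (Or.inr ⟨ha, hc⟩)
        exact ⟨α, β, h1, by tauto, by tauto, h4⟩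
    · obtain ⟨α, β, h1, h2, h3, h4⟩ := key a b hab (Or.inr ⟨ha, hb⟩)
      exact ⟨α, β, h1, by tauto, by tauto, h4⟩

set_option maxHeartbeats 1000000 in
/-- Sylvester–Gallai via Kelly's argument: a finite non-collinear set has an ordinary line. -/
lemma exists_ordinary {S : Set Pt} (hfin : S.Finite) {p q r : Pt}
    (hp : p ∈ S) (hq : q ∈ S) (hr : r ∈ S) (hpqr : detp p q r ≠ 0) :
    ∃ a ∈ S, ∃ b ∈ S, a ≠ b ∧ ∀ z ∈ S, z ∈ lineThrough a b → z = a ∨ z = b := by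
  classical
  set T : Set (Pt × Pt × Pt) :=
    {w | w.1 ∈ S ∧ w.2.1 ∈ S ∧ w.2.2 ∈ S ∧ detp w.2.1 w.2.2 w.1 ≠ 0} with hT
  have hTfin : T.Finite := by
    apply (hfin.prod (hfin.prod hfin)).subset
    rintro ⟨x, y, z⟩ ⟨h1, h2, h3, _⟩
    exact ⟨h1, h2, h3⟩
  have hTne : T.Nonempty := ⟨(r, p, q), hr, hp, hq, hpqr⟩
  set g : Pt × Pt × Pt → ℝ := fun w =>
    (detp w.2.1 w.2.2 w.1)^2 / ((w.2.2.1 - w.2.1.1)^2 + (w.2.2.2 - w.2.1.2)^2) with hg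
  obtain ⟨⟨p0, x0, y0⟩, hmemT, hmin⟩ := Set.exists_min_image T g hTfin hTne
  obtain ⟨hp0S, hx0S, hy0S, hD⟩ := hmemT
  have hx0y0 : x0 ≠ y0 := (ne_of_detp_ne_zero hD).1
  refine ⟨x0, hx0S, y0, hy0S, hx0y0, ?_⟩
  intro z hzS hzmem
  by_contra hcon
  push_neg at hcon
  obtain ⟨hzx, hzy⟩ := hcon
  -- notation
  set v1 : ℝ := y0.1 - x0.1 with hv1
  set v2 : ℝ := y0.2 - x0.2 with hv2
  set N : ℝ := v1^2 + v2^2 with hNdef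
  set D : ℝ := detp x0 y0 p0 with hDdef
  set T0 : ℝ := (p0.1 - x0.1) * v1 + (p0.2 - x0.2) * v2 with hT0
  have hy1 : y0.1 = x0.1 + v1 := by rw [hv1]; ring
  have hy2 : y0.2 = x0.2 + v2 := by rw [hv2]; ring
  have hvne : v1 ≠ 0 ∨ v2 ≠ 0 := by
    by_contra hc
    push_neg at hc
    exact hx0y0 (Prod.ext (by rw [hv1] at hc; linarith [hc.1]) (by rw [hv2] at hc; linarith [hc.2]))
  have hN : 0 < N := by
    rcases hvne with h | h
    · have h1 : v1^2 ≠ 0 := pow_ne_zero 2 h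
      nlinarith [sq_nonneg v1, sq_nonneg v2, lt_of_le_of_ne (sq_nonneg v1) (Ne.symm h1)]
    · have h1 : v2^2 ≠ 0 := pow_ne_zero 2 h
      nlinarith [sq_nonneg v1, sq_nonneg v2, lt_of_le_of_ne (sq_nonneg v2) (Ne.symm h1)]
  have hD2 : 0 < D^2 := by
    have h0 := sq_nonneg D
    have h1 : D^2 ≠ 0 := pow_ne_zero 2 hD
    exact lt_of_le_of_ne h0 (Ne.symm h1)
  -- parameter of z on the line
  obtain ⟨sp, hs1, hs2⟩ := mem_lineThrough_iff.mp hzmem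
  rw [← hv1] at hs1
  rw [← hv2] at hs2
  have hs0 : sp ≠ 0 := by
    rintro rfl
    exact hzx (Prod.ext (by rw [hs1]; ring) (by rw [hs2]; ring))
  have hs1' : sp ≠ 1 := by
    rintro rfl
    exact hzy (Prod.ext (by rw [hs1, hy1]; ring) (by rw [hs2, hy2]; ring))
  -- pigeonhole on parameters 0, 1, sp
  obtain ⟨α, β, hαβ, hαmem, hβmem, hside⟩ :=
    side_pigeonhole (T0 / N) 0 1 sp (by norm_num) (Ne.symm hs0) (Ne.symm hs1')
  set u : Pt := (x0.1 + α * v1, x0.2 + α * v2) with hu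
  set w : Pt := (x0.1 + β * v1, x0.2 + β * v2) with hw
  have hmemuw : ∀ γ : ℝ, (γ = 0 ∨ γ = 1 ∨ γ = sp) →
      ((x0.1 + γ * v1, x0.2 + γ * v2) : Pt) ∈ S := by
    intro γ hγ
    rcases hγ with h0 | h0 | h0
    · have h : ((x0.1 + γ * v1, x0.2 + γ * v2) : Pt) = x0 := by
        apply Prod.ext <;> simp [h0]
      rw [h]; exact hx0S
    · have h : ((x0.1 + γ * v1, x0.2 + γ * v2) : Pt) = y0 := by
        apply Prod.ext <;> simp [h0, hy1, hy2]
      rw [h]; exact hy0S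
    · have h : ((x0.1 + γ * v1, x0.2 + γ * v2) : Pt) = z := by
        apply Prod.ext <;> simp [h0, hs1, hs2]
      rw [h]; exact hzS
  have huS : u ∈ S := by rw [hu]; exact hmemuw α hαmem
  have hwS : w ∈ S := by rw [hw]; exact hmemuw β hβmem
  -- key identity 1 : detp p0 w u = (α - β) * D
  have idet : detp p0 w u = (α - β) * D := by
    rw [hu, hw, hDdef]
    unfold detp
    simp only
    rw [hy1, hy2]
    ring
  -- key identity 2 : M * N = D^2 + (β*N - T0)^2
  set M : ℝ := (w.1 - p0.1)^2 + (w.2 - p0.2)^2 with hM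
  have iM : M * N = D^2 + (β * N - T0)^2 := by
    rw [hM, hw, hDdef, hNdef, hT0]
    unfold detp
    simp only
    rw [hy1, hy2]
    ring
  -- new triple is in T
  have hDu : detp p0 w u ≠ 0 := by
    rw [idet]
    exact mul_ne_zero (sub_ne_zero.mpr hαβ) hD
  have hnewT : ((u, p0, w) : Pt × Pt × Pt) ∈ T := ⟨huS, hp0S, hwS, hDu⟩
  have hmin' := hmin _ hnewT
  -- compute the two values of g
  have hgold : g (p0, x0, y0) = D^2 / N := by
    rw [hDdef, hNdef, hv1, hv2]
  have hgnew : g (u, p0, w) = ((α - β) * D)^2 / M := by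
    rw [← idet, hM]
  clear_value v1 v2 N D T0 u w M g
  have hM0 : 0 < M := by nlinarith [sq_nonneg (β * N - T0), hD2, hN, iM]
  -- the strict inequality
  have step1 : (α - β)^2 * N^2 ≤ (β * N - T0)^2 := by
    have h := mul_le_mul_of_nonneg_right hside (sq_nonneg N)
    have e : (β - T0 / N)^2 * N^2 = (β * N - T0)^2 := by
      field_simp
    calc (α - β)^2 * N^2 ≤ (β - T0 / N)^2 * N^2 := h
      _ = (β * N - T0)^2 := e
  have key : ((α - β) * D)^2 * N < D^2 * M := by
    have h1 : ((α - β) * D)^2 * N * N ≤ D^2 * (β * N - T0)^2 := by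
      have h := mul_le_mul_of_nonneg_left step1 hD2.le
      calc ((α - β) * D)^2 * N * N = D^2 * ((α - β)^2 * N^2) := by ring
        _ ≤ D^2 * (β * N - T0)^2 := h
    have h2 : D^2 * (β * N - T0)^2 < D^2 * (M * N) := by
      rw [iM]
      nlinarith [mul_pos hD2 hD2]
    have h3 : ((α - β) * D)^2 * N * N < D^2 * M * N := by
      calc ((α - β) * D)^2 * N * N ≤ D^2 * (β * N - T0)^2 := h1
        _ < D^2 * (M * N) := h2
        _ = D^2 * M * N := by ring
    exact lt_of_mul_lt_mul_right h3 hN.le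
  have hglt : g (u, p0, w) < g (p0, x0, y0) := by
    rw [hgold, hgnew, div_lt_div_iff₀ hM0 hN]
    exact key
  linarith [hmin', hglt]

/-- A finite set containing four points in general position, in which any two distinct
connecting lines meet at a point of the set, cannot exist. -/
lemma no_closed_config {S : Set Pt} (hfin : S.Finite)
    {p1 p2 p3 p4 : Pt} (h1 : p1 ∈ S) (h2 : p2 ∈ S) (h3 : p3 ∈ S) (h4 : p4 ∈ S)
    (hp12 : p1 ≠ p2) (hp13 : p1 ≠ p3) (hp14 : p1 ≠ p4)
    (hp23 : p2 ≠ p3) (hp24 : p2 ≠ p4) (hp34 : p3 ≠ p4)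
    (hnc : ∀ a b c : Pt, (a = p1 ∨ a = p2 ∨ a = p3 ∨ a = p4) →
      (b = p1 ∨ b = p2 ∨ b = p3 ∨ b = p4) → (c = p1 ∨ c = p2 ∨ c = p3 ∨ c = p4) →
      a ≠ b → a ≠ c → b ≠ c → detp a b c ≠ 0)
    (hmeet : ∀ c d e f : Pt, c ∈ S → d ∈ S → e ∈ S → f ∈ S → c ≠ d → e ≠ f →
      lineThrough c d ≠ lineThrough e f →
      ∃ x ∈ S, x ∈ lineThrough c d ∧ x ∈ lineThrough e f) : False := by
  -- an ordinary line {a, b}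
  obtain ⟨a, haS, b, hbS, hab, hord⟩ :=
    exists_ordinary hfin h2 h3 h1 (hnc p2 p3 p1 (by tauto) (by tauto) (by tauto)
      hp23 (Ne.symm hp12) (Ne.symm hp13))
  -- every connecting line passes through a or b
  have hB : ∀ c d : Pt, c ∈ S → d ∈ S → c ≠ d →
      a ∈ lineThrough c d ∨ b ∈ lineThrough c d := by
    intro c d hc hd hcd
    by_cases heq : lineThrough c d = lineThrough a b
    · rw [heq]
      exact Or.inl (left_mem_lineThrough a b)
    · obtain ⟨x, hxS, hx1, hx2⟩ := hmeet c d a b hc hd haS hbS hcd hab heq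
      rcases hord x hxS hx2 with rfl | rfl
      · exact Or.inl hx1
      · exact Or.inr hx1
  -- for a "vertex" x of a quadrangle, a = x or b = x
  have hvert : ∀ x y z w : Pt, x ∈ S → y ∈ S → z ∈ S → w ∈ S →
      detp x y z ≠ 0 → detp x y w ≠ 0 → detp x z w ≠ 0 → a = x ∨ b = x := by
    intro x y z w hx hy hz hw n1 n2 n3
    obtain ⟨hxy, hxz', hyz⟩ := ne_of_detp_ne_zero n1
    obtain ⟨-, hxw', hyw⟩ := ne_of_detp_ne_zero n2
    obtain ⟨hxz, hxw, hzw⟩ := ne_of_detp_ne_zero n3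
    have d12 : lineThrough x y ≠ lineThrough x z := by
      intro he
      exact n1 ((mem_lineThrough_iff_det hxy).mp (he ▸ right_mem_lineThrough x z))
    have d13 : lineThrough x y ≠ lineThrough x w := by
      intro he
      exact n2 ((mem_lineThrough_iff_det hxy).mp (he ▸ right_mem_lineThrough x w))
    have d23 : lineThrough x z ≠ lineThrough x w := by
      intro he
      exact n3 ((mem_lineThrough_iff_det hxz).mp (he ▸ right_mem_lineThrough x w))
    have l1 := hB x y hx hy hxy
    have l2 := hB x z hx hz hxz
    have l3 := hB x w hx hw hxw
    rcases l1 with m1 | m1 <;> rcases l2 with m2 | m2 <;> rcases l3 with m3 | m3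
    · exact Or.inl (inter_unique hxy hxz d12 m1 m2 (left_mem_lineThrough x y)
        (left_mem_lineThrough x z))
    · exact Or.inl (inter_unique hxy hxz d12 m1 m2 (left_mem_lineThrough x y)
        (left_mem_lineThrough x z))
    · exact Or.inl (inter_unique hxy hxw d13 m1 m3 (left_mem_lineThrough x y)
        (left_mem_lineThrough x w))
    · exact Or.inr (inter_unique hxz hxw d23 m2 m3 (left_mem_lineThrough x z)
        (left_mem_lineThrough x w))
    · exact Or.inl (inter_unique hxz hxw d23 m2 m3 (left_mem_lineThrough x z)
        (left_mem_lineThrough x w))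
    · exact Or.inr (inter_unique hxy hxw d13 m1 m3 (left_mem_lineThrough x y)
        (left_mem_lineThrough x w))
    · exact Or.inr (inter_unique hxy hxz d12 m1 m2 (left_mem_lineThrough x y)
        (left_mem_lineThrough x z))
    · exact Or.inr (inter_unique hxy hxz d12 m1 m2 (left_mem_lineThrough x y)
        (left_mem_lineThrough x z))
  have e1 : a = p1 ∨ b = p1 := hvert p1 p2 p3 p4 h1 h2 h3 h4
    (hnc _ _ _ (by tauto) (by tauto) (by tauto) hp12 hp13 hp23)
    (hnc _ _ _ (by tauto) (by tauto) (by tauto) hp12 hp14 hp24)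
    (hnc _ _ _ (by tauto) (by tauto) (by tauto) hp13 hp14 hp34)
  have e2 : a = p2 ∨ b = p2 := hvert p2 p1 p3 p4 h2 h1 h3 h4
    (hnc _ _ _ (by tauto) (by tauto) (by tauto) (Ne.symm hp12) hp23 hp13)
    (hnc _ _ _ (by tauto) (by tauto) (by tauto) (Ne.symm hp12) hp24 hp14)
    (hnc _ _ _ (by tauto) (by tauto) (by tauto) hp23 hp24 hp34)
  have e3 : a = p3 ∨ b = p3 := hvert p3 p1 p2 p4 h3 h1 h2 h4
    (hnc _ _ _ (by tauto) (by tauto) (by tauto) (Ne.symm hp13) (Ne.symm hp23) hp12)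
    (hnc _ _ _ (by tauto) (by tauto) (by tauto) (Ne.symm hp13) hp34 hp14)
    (hnc _ _ _ (by tauto) (by tauto) (by tauto) (Ne.symm hp23) hp34 hp24)
  rcases e1 with g1 | g1 <;> rcases e2 with g2 | g2 <;> rcases e3 with g3 | g3 <;>
    first
    | exact hp12 (g1.symm.trans g2)
    | exact hp13 (g1.symm.trans g3)
    | exact hp23 (g2.symm.trans g3)

/-- The iterated point–line construction: `P 1` is a set of four points in general position,
`L 1` is the set of lines through pairs of them; `P (k+1)` adds all intersection points of
pairs of distinct lines of `L k`, and `L (k+1)` adds all lines through pairs of distinct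
points of `P (k+1)`.  No two distinct lines of any `L k` are parallel. -/
structure IterConfig where
  P : ℕ → Set Pt
  L : ℕ → Set Ln
  card_P1 : (P 1).ncard = 4
  genPos : ∀ p ∈ P 1, ∀ q ∈ P 1, ∀ r ∈ P 1,
    p ≠ q → p ≠ r → q ≠ r → ¬ Collinear ℝ ({p, q, r} : Set Pt)
  L1_def : L 1 = {l | ∃ p ∈ P 1, ∃ q ∈ P 1, p ≠ q ∧ l = lineThrough p q}
  P_succ : ∀ k, 1 ≤ k →
    P (k + 1) = P k ∪ {x | ∃ l ∈ L k, ∃ l' ∈ L k, l ≠ l' ∧ x ∈ l ∧ x ∈ l'}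
  L_succ : ∀ k, 1 ≤ k →
    L (k + 1) = L k ∪ {l | ∃ p ∈ P (k + 1), ∃ q ∈ P (k + 1), p ≠ q ∧ l = lineThrough p q}
  noParallel : ∀ k, 1 ≤ k → ∀ l ∈ L k, ∀ l' ∈ L k, l ≠ l' →
    AffineSubspace.direction l ≠ AffineSubspace.direction l'

/-- `n k`, the number of points at the beginning of stage `k`. -/
def nPts (C : IterConfig) (k : ℕ) : ℕ := (C.P k).ncard

/-- `m k`, the number of lines at the beginning of stage `k`. -/
def nLns (C : IterConfig) (k : ℕ) : ℕ := (C.L k).ncard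

/-- `d k p`, the degree of a point: the number of lines of `L k` incident to `p`. -/
def ptDeg (C : IterConfig) (k : ℕ) (p : Pt) : ℕ := {l | l ∈ C.L k ∧ p ∈ l}.ncard

/-- `δ k`, the minimum degree of a point of `P k`. -/
def minDeg (C : IterConfig) (k : ℕ) : ℕ := sInf {d | ∃ p ∈ C.P k, d = ptDeg C k p}

lemma IterConfig.invariants (C : IterConfig) : ∀ k, 1 ≤ k →
    (C.P k).Finite ∧ (C.L k).Finite ∧
    (∀ l ∈ C.L k, ∃ p ∈ C.P k, ∃ q ∈ C.P k, p ≠ q ∧ l = lineThrough p q) ∧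
    C.P 1 ⊆ C.P k ∧
    (∀ p ∈ C.P k, ∀ q ∈ C.P k, p ≠ q → lineThrough p q ∈ C.L k) := by
  have hP1fin : (C.P 1).Finite := by
    apply Set.finite_of_ncard_ne_zero
    rw [C.card_P1]; norm_num
  intro k
  induction k with
  | zero => omega
  | succ n ih =>
    intro _
    by_cases hn : 1 ≤ n
    case neg =>
      -- n = 0, so n + 1 = 1 : base case
      have : n = 0 := by omega
      subst this
      refine ⟨hP1fin, ?_, ?_, le_refl _, ?_⟩
      · rw [C.L1_def]
        apply (Set.Finite.image2 lineThrough hP1fin hP1fin).subset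
        rintro l ⟨p, hp, q, hq, -, rfl⟩
        exact Set.mem_image2_of_mem hp hq
      · rw [C.L1_def]
        rintro l ⟨p, hp, q, hq, hne, rfl⟩
        exact ⟨p, hp, q, hq, hne, rfl⟩
      · intro p hp q hq hne
        rw [C.L1_def]
        exact ⟨p, hp, q, hq, hne, rfl⟩
    case pos =>
      obtain ⟨hPfin, hLfin, hrep, hP1sub, hconn⟩ := ih hn
      have hPsub : C.P n ⊆ C.P (n + 1) := by
        rw [C.P_succ n hn]; exact Set.subset_union_left
      have hIfin : {x : Pt | ∃ l ∈ C.L n, ∃ l' ∈ C.L n, l ≠ l' ∧ x ∈ l ∧ x ∈ l'}.Finite := by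
        have hsub : {x : Pt | ∃ l ∈ C.L n, ∃ l' ∈ C.L n, l ≠ l' ∧ x ∈ l ∧ x ∈ l'} ⊆
            ⋃ l ∈ C.L n, ⋃ l' ∈ C.L n, {x : Pt | x ∈ l ∧ x ∈ l' ∧ l ≠ l'} := by
          rintro x ⟨l, hl, l', hl', hne, h1, h2⟩
          simp only [Set.mem_iUnion]
          exact ⟨l, hl, l', hl', h1, h2, hne⟩
        apply Set.Finite.subset ?_ hsub
        apply Set.Finite.biUnion hLfin
        intro l hl
        apply Set.Finite.biUnion hLfin
        intro l' hl'
        by_cases hne : l = l'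
        · have : {x : Pt | x ∈ l ∧ x ∈ l' ∧ l ≠ l'} = ∅ := by
            ext x; simp only [Set.mem_setOf_eq, Set.mem_empty_iff_false, iff_false]
            rintro ⟨-, -, h⟩; exact h hne
          rw [this]; exact Set.finite_empty
        · apply Set.Subsingleton.finite
          intro x hx y hy
          obtain ⟨hx1, hx2, -⟩ := hx
          obtain ⟨hy1, hy2, -⟩ := hy
          obtain ⟨p, -, q, -, hpq, rfl⟩ := hrep l hl
          obtain ⟨p', -, q', -, hpq', rfl⟩ := hrep l' hl'
          exact inter_unique hpq hpq' hne hx1 hx2 hy1 hy2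
      have hPfin' : (C.P (n + 1)).Finite := by
        rw [C.P_succ n hn]; exact hPfin.union hIfin
      refine ⟨hPfin', ?_, ?_, hP1sub.trans hPsub, ?_⟩
      · rw [C.L_succ n hn]
        apply Set.Finite.union hLfin
        apply (Set.Finite.image2 lineThrough hPfin' hPfin').subset
        rintro l ⟨p, hp, q, hq, -, rfl⟩
        exact Set.mem_image2_of_mem hp hq
      · rw [C.L_succ n hn]
        rintro l (hl | ⟨p, hp, q, hq, hne, rfl⟩)
        · obtain ⟨p, hp, q, hq, hne, rfl⟩ := hrep l hl
          exact ⟨p, hPsub hp, q, hPsub hq, hne, rfl⟩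
        · exact ⟨p, hp, q, hq, hne, rfl⟩
      · intro p hp q hq hne
        rw [C.L_succ n hn]
        exact Or.inr ⟨p, hp, q, hq, hne, rfl⟩

/-- The number of points strictly increases at every stage: `n (k+1) ≥ n k + 1`. -/
theorem stmt_1 (C : IterConfig) (k : ℕ) (hk : 1 ≤ k) :
    nPts C k + 1 ≤ nPts C (k + 1) := by
  obtain ⟨hPfin, hLfin, hrep, hP1sub, hconn⟩ := C.invariants k hk
  obtain ⟨hPfin', -, -, -, -⟩ := C.invariants (k + 1) (by omega)
  have hPsub : C.P k ⊆ C.P (k + 1) := by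
    rw [C.P_succ k hk]; exact Set.subset_union_left
  -- extract the four points of P 1
  have hP1fin : (C.P 1).Finite := by
    apply Set.finite_of_ncard_ne_zero
    rw [C.card_P1]; norm_num
  obtain ⟨p1, hp1⟩ : (C.P 1).Nonempty := by
    apply Set.nonempty_of_ncard_ne_zero
    rw [C.card_P1]; norm_num
  have h3 : (C.P 1 \ {p1}).ncard = 3 := by
    rw [Set.ncard_diff_singleton_of_mem hp1, C.card_P1]
  obtain ⟨p2, p3, p4, h23, h24, h34, hset⟩ := Set.ncard_eq_three.mp h3
  have hp2 : p2 ∈ C.P 1 := by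
    have : p2 ∈ C.P 1 \ {p1} := by rw [hset]; simp
    exact this.1
  have hp3 : p3 ∈ C.P 1 := by
    have : p3 ∈ C.P 1 \ {p1} := by rw [hset]; simp
    exact this.1
  have hp4 : p4 ∈ C.P 1 := by
    have : p4 ∈ C.P 1 \ {p1} := by rw [hset]; simp
    exact this.1
  have h12 : p1 ≠ p2 := by
    have : p2 ∈ C.P 1 \ {p1} := by rw [hset]; simp
    exact fun h => this.2 (by simp [h.symm])
  have h13 : p1 ≠ p3 := by
    have : p3 ∈ C.P 1 \ {p1} := by rw [hset]; simp
    exact fun h => this.2 (by simp [h.symm])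
  have h14 : p1 ≠ p4 := by
    have : p4 ∈ C.P 1 \ {p1} := by rw [hset]; simp
    exact fun h => this.2 (by simp [h.symm])
  -- the key step : a new point appears
  suffices hx : ∃ x ∈ C.P (k + 1), x ∉ C.P k by
    obtain ⟨x, hx1, hx2⟩ := hx
    calc nPts C k + 1 = (insert x (C.P k)).ncard :=
          (Set.ncard_insert_of_notMem hx2 hPfin).symm
      _ ≤ (C.P (k + 1)).ncard :=
          Set.ncard_le_ncard (Set.insert_subset hx1 hPsub) hPfin'
  by_contra hno
  push_neg at hno
  apply no_closed_config hPfin (hP1sub hp1) (hP1sub hp2) (hP1sub hp3) (hP1sub hp4)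
    h12 h13 h14 h23 h24 h34
  · -- general position
    intro a b c ha hb hc hab hac hbc
    have hmem : ∀ z : Pt, (z = p1 ∨ z = p2 ∨ z = p3 ∨ z = p4) → z ∈ C.P 1 := by
      rintro z (rfl | rfl | rfl | rfl) <;> assumption
    exact detp_ne_zero_of_not_collinear
      (C.genPos a (hmem a ha) b (hmem b hb) c (hmem c hc) hab hac hbc)
  · -- meeting points stay in P k
    intro c d e f hc hd he hf hcd hef hne
    have hl1 : lineThrough c d ∈ C.L k := hconn c hc d hd hcd
    have hl2 : lineThrough e f ∈ C.L k := hconn e he f hf hef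
    have hdir := C.noParallel k hk _ hl1 _ hl2 hne
    obtain ⟨x, hx1, hx2⟩ := exists_inter hcd hef hdir
    have hxP : x ∈ C.P (k + 1) := by
      rw [C.P_succ k hk]
      exact Or.inr ⟨_, hl1, _, hl2, hne, hx1, hx2⟩
    exact ⟨x, hno x hxP, hx1, hx2⟩
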